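/- The explicit functions ω₁(t) = ω₀ (√I₁₁ I₂₂ / (I₂₂I₁₃² + I₁₁I₂₃²)) · (2√I₂₂ I₁₃ − √I₁₁ I₂₃ (e^u − e^{−u}))/(e^u + e^{−u}) and ω₂(t) = ω₀ (I₁₁√I₂₂ / (I₂₂I₁₃² + I₁₁I₂₃²)) · (2√I₁₁ I₂₃ + √I₂₂ I₁₃ (e^u − e^{−u}))/(e^u + e^{−u}), with u = ω₀(t − t₀), solve the reduced Suslov equations I₁₁ω₁' = −ω₂(I₁₃ω₁ + I₂₃ω₂), I₂₂ω₂' = ω₁(I₁₃ω₁ + I₂₃ω₂). -/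

import Mathlib

/-- The explicit hyperbolic-function formulas solve the reduced Suslov system. -/
theorem suslov_reduced_explicit_solution
    (I11 I22 I13 I23 ω0 t0 : ℝ) (hI11 : 0 < I11) (hI22 : 0 < I22)
    (hI : ¬(I13 = 0 ∧ I23 = 0))
    (ω1 ω2 : ℝ → ℝ)
    (hω1 : ω1 = fun t =>
      ω0 * (Real.sqrt I11 * I22 / (I22 * I13 ^ 2 + I11 * I23 ^ 2)) *
        ((2 * Real.sqrt I22 * I13 - Real.sqrt I11 * I23 *
            (Real.exp (ω0 * (t - t0)) - Real.exp (-(ω0 * (t - t0))))) /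
          (Real.exp (ω0 * (t - t0)) + Real.exp (-(ω0 * (t - t0))))))
    (hω2 : ω2 = fun t =>
      ω0 * (I11 * Real.sqrt I22 / (I22 * I13 ^ 2 + I11 * I23 ^ 2)) *
        ((2 * Real.sqrt I11 * I23 + Real.sqrt I22 * I13 *
            (Real.exp (ω0 * (t - t0)) - Real.exp (-(ω0 * (t - t0))))) /
          (Real.exp (ω0 * (t - t0)) + Real.exp (-(ω0 * (t - t0)))))) :
    ∀ t, HasDerivAt ω1 (-ω2 t * (I13 * ω1 t + I23 * ω2 t) / I11) t ∧
         HasDerivAt ω2 (ω1 t * (I13 * ω1 t + I23 * ω2 t) / I22) t := by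
  subst hω1 hω2
  intro t
  have ha2 : Real.sqrt I11 ^ 2 = I11 := Real.sq_sqrt hI11.le
  have hb2 : Real.sqrt I22 ^ 2 = I22 := Real.sq_sqrt hI22.le
  have hapos : 0 < Real.sqrt I11 := Real.sqrt_pos.mpr hI11
  have hbpos : 0 < Real.sqrt I22 := Real.sqrt_pos.mpr hI22
  have hD : 0 < I22 * I13 ^ 2 + I11 * I23 ^ 2 := by
    rcases not_and_or.mp hI with h | h
    · have h2 : 0 < I13 ^ 2 := lt_of_le_of_ne (sq_nonneg _) (Ne.symm (pow_ne_zero 2 h))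
      nlinarith [sq_nonneg I23]
    · have h2 : 0 < I23 ^ 2 := lt_of_le_of_ne (sq_nonneg _) (Ne.symm (pow_ne_zero 2 h))
      nlinarith [sq_nonneg I13]
  have hu : HasDerivAt (fun s : ℝ => ω0 * (s - t0)) ω0 t := by
    simpa using ((hasDerivAt_id t).sub_const t0).const_mul ω0
  have hE : HasDerivAt (fun s : ℝ => Real.exp (ω0 * (s - t0)))
      (Real.exp (ω0 * (t - t0)) * ω0) t := hu.exp
  have hF : HasDerivAt (fun s : ℝ => Real.exp (-(ω0 * (s - t0))))
      (Real.exp (-(ω0 * (t - t0))) * (-ω0)) t := hu.neg.exp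
  set p := Real.exp (ω0 * (t - t0)) with hp
  set q := Real.exp (-(ω0 * (t - t0))) with hq
  have hppos : 0 < p := Real.exp_pos _
  have hqpos : 0 < q := Real.exp_pos _
  have hden : p + q ≠ 0 := by positivity
  have hqe : q = p⁻¹ := by rw [hp, hq, Real.exp_neg]
  have hDen : HasDerivAt (fun s : ℝ => Real.exp (ω0 * (s - t0)) + Real.exp (-(ω0 * (s - t0))))
      (p * ω0 + q * (-ω0)) t := hE.add hF
  have hN1 : HasDerivAt (fun s : ℝ => 2 * Real.sqrt I22 * I13 - Real.sqrt I11 * I23 *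
      (Real.exp (ω0 * (s - t0)) - Real.exp (-(ω0 * (s - t0)))))
      (-(Real.sqrt I11 * I23 * (p * ω0 - q * (-ω0)))) t :=
    ((hE.sub hF).const_mul _).const_sub _
  have hN2 : HasDerivAt (fun s : ℝ => 2 * Real.sqrt I11 * I23 + Real.sqrt I22 * I13 *
      (Real.exp (ω0 * (s - t0)) - Real.exp (-(ω0 * (s - t0)))))
      (Real.sqrt I22 * I13 * (p * ω0 - q * (-ω0))) t :=
    ((hE.sub hF).const_mul _).const_add _
  have hd1 := (hN1.div hDen hden).const_mul
    (ω0 * (Real.sqrt I11 * I22 / (I22 * I13 ^ 2 + I11 * I23 ^ 2)))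
  have hd2 := (hN2.div hDen hden).const_mul
    (ω0 * (I11 * Real.sqrt I22 / (I22 * I13 ^ 2 + I11 * I23 ^ 2)))
  constructor
  · refine hd1.congr_deriv ?_
    set a := Real.sqrt I11 with hav
    set b := Real.sqrt I22 with hbv
    simp only [← hp, ← hq]
    clear hd1 hd2 hN1 hN2 hDen hE hF
    clear_value p q a b
    subst hqe
    rw [← ha2, ← hb2]
    have hane : a ≠ 0 := hapos.ne'
    have hbne : b ≠ 0 := hbpos.ne'
    have hDne : b ^ 2 * I13 ^ 2 + a ^ 2 * I23 ^ 2 ≠ 0 := by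
      rw [ha2, hb2]; exact hD.ne'
    field_simp
    ring
  · refine hd2.congr_deriv ?_
    set a := Real.sqrt I11 with hav
    set b := Real.sqrt I22 with hbv
    simp only [← hp, ← hq]
    clear hd1 hd2 hN1 hN2 hDen hE hF
    clear_value p q a b
    subst hqe
    rw [← ha2, ← hb2]
    have hane : a ≠ 0 := hapos.ne'
    have hbne : b ≠ 0 := hbpos.ne'
    have hDne : b ^ 2 * I13 ^ 2 + a ^ 2 * I23 ^ 2 ≠ 0 := by
      rw [ha2, hb2]; exact hD.ne'
    field_simp
    ring
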